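/- Let G=(V,E,W) be a finite graph with symmetric weights and, for each ordered pair (i,j) with (i,j)∈E, let f_ij: ℝ→ℝ be a function admitting an antiderivative F_ij (i.e. F_ij' = f_ij). Suppose H: ℝ^N × ℝ^N → ℝ is differentiable and satisfies, for every (ρ,S) ∈ ℝ^N × ℝ^N and every i ∈ V, ∂H/∂S_i (ρ,S) = Σ_{j∈N(i)} [ w_ij f_ij(S_i − S_j) ρ_j − w_ji f_ji(S_j − S_i) ρ_i ]. Then there exists a function 𝒱: ℝ^N → ℝ such that H(ρ,S) = Σ_{i∈V} Σ_{j∈N(i)} ρ_i F_ji(S_j − S_i) w_ji + 𝒱(ρ) for all (ρ,S). -/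

import Mathlib

open Finset Function


/-- On a finite weighted graph, if the partial derivatives of a differentiable
Hamiltonian `H` with respect to the `S`-variables coincide with the right-hand side of the
generalized master equation built from rate functions `f_ij` with antiderivatives `F_ij`,
then `H` has the form `Σ_i Σ_{j ∈ N(i)} ρ_i F_{ji}(S_j − S_i) w_{ji} + 𝒱(ρ)`. -/
theorem hamiltonian_structure_on_graph {N : ℕ}
    (G : SimpleGraph (Fin N)) [DecidableRel G.Adj]
    (w : Fin N → Fin N → ℝ)
    (hw_symm : ∀ i j, w i j = w j i)
    (hw_pos : ∀ i j, G.Adj i j → 0 < w i j)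
    (hw_zero : ∀ i j, ¬ G.Adj i j → w i j = 0)
    (f F : Fin N → Fin N → ℝ → ℝ)
    (hF : ∀ i j x, HasDerivAt (F i j) (f i j x) x)
    (H : (Fin N → ℝ) → (Fin N → ℝ) → ℝ)
    (hHdiff : Differentiable ℝ (fun p : (Fin N → ℝ) × (Fin N → ℝ) => H p.1 p.2))
    (hHS : ∀ (ρ S : Fin N → ℝ) (i : Fin N),
      HasDerivAt (fun x => H ρ (Function.update S i x))
        (∑ j ∈ G.neighborFinset i,
          (w i j * f i j (S i - S j) * ρ j - w j i * f j i (S j - S i) * ρ i)) (S i)) :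
    ∃ 𝒱 : (Fin N → ℝ) → ℝ, ∀ ρ S : Fin N → ℝ,
      H ρ S = ∑ i, ∑ j ∈ G.neighborFinset i, ρ i * F j i (S j - S i) * w j i + 𝒱 ρ := by
  classical
  set Φ : (Fin N → ℝ) → (Fin N → ℝ) → ℝ :=
    fun ρ S => ∑ i, ∑ j ∈ G.neighborFinset i, ρ i * F j i (S j - S i) * w j i with hΦdef
  -- derivative of Φ in the i-th S coordinate
  have hΦd : ∀ (ρ S : Fin N → ℝ) (i : Fin N) (x : ℝ),
      HasDerivAt (fun y => Φ ρ (Function.update S i y))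
        (∑ j ∈ G.neighborFinset i,
          (w i j * f i j (x - S j) * ρ j - w j i * f j i (S j - x) * ρ i)) x := by
    intro ρ S i x
    have hmain : HasDerivAt (fun y => Φ ρ (Function.update S i y))
        (∑ k, ∑ j ∈ G.neighborFinset k,
          (if k = i then -(ρ i * f j i (S j - x) * w j i)
           else if j = i then ρ k * f i k (x - S k) * w i k else 0)) x := by
      apply HasDerivAt.fun_sum
      intro k _
      apply HasDerivAt.fun_sum
      intro j hj
      have hadj : G.Adj k j := (G.mem_neighborFinset k j).mp hj
      have hjk : j ≠ k := (G.ne_of_adj hadj).symm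
      by_cases hk : k = i
      · subst hk
        rw [if_pos rfl]
        have heq : (fun y => ρ k * F j k (Function.update S k y j - Function.update S k y k) * w j k)
            = fun y => ρ k * F j k (S j - y) * w j k := by
          funext y
          simp [Function.update_of_ne hjk]
        rw [heq]
        have h1 : HasDerivAt (fun y : ℝ => S j - y) (-1) x := (hasDerivAt_id x).const_sub (S j)
        have h2 := ((hF j k (S j - x)).comp x h1).const_mul (ρ k) |>.mul_const (w j k)
        exact h2.congr_deriv (by ring)
      · rw [if_neg hk]
        by_cases hji : j = i
        · subst hji
          rw [if_pos rfl]
          have heq : (fun y => ρ k * F j k (Function.update S j y j - Function.update S j y k) * w j k)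
              = fun y => ρ k * F j k (y - S k) * w j k := by
            funext y
            simp [Function.update_of_ne (Ne.symm hjk)]
          rw [heq]
          have h1 : HasDerivAt (fun y : ℝ => y - S k) 1 x := by
            simpa using (hasDerivAt_id x).sub_const (S k)
          have h2 := ((hF j k (x - S k)).comp x h1).const_mul (ρ k) |>.mul_const (w j k)
          exact h2.congr_deriv (by ring)
        · rw [if_neg hji]
          have heq : (fun y => ρ k * F j k (Function.update S i y j - Function.update S i y k) * w j k)
              = fun _ => ρ k * F j k (S j - S k) * w j k := by
            funext y
            simp [Function.update_of_ne hji, Function.update_of_ne hk]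
          rw [heq]
          exact hasDerivAt_const x _
    have hsum : (∑ k, ∑ j ∈ G.neighborFinset k,
          (if k = i then -(ρ i * f j i (S j - x) * w j i)
           else if j = i then ρ k * f i k (x - S k) * w i k else 0))
        = ∑ j ∈ G.neighborFinset i,
          (w i j * f i j (x - S j) * ρ j - w j i * f j i (S j - x) * ρ i) := by
      rw [← Finset.add_sum_erase _ _ (Finset.mem_univ i)]
      have h1 : (∑ j ∈ G.neighborFinset i,
          (if i = i then -(ρ i * f j i (S j - x) * w j i)
           else if j = i then ρ i * f i i (x - S i) * w i i else 0))
          = ∑ j ∈ G.neighborFinset i, -(ρ i * f j i (S j - x) * w j i) := by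
        simp
      have h2 : (∑ k ∈ Finset.univ.erase i, ∑ j ∈ G.neighborFinset k,
          (if k = i then -(ρ i * f j i (S j - x) * w j i)
           else if j = i then ρ k * f i k (x - S k) * w i k else 0))
          = ∑ k ∈ G.neighborFinset i, ρ k * f i k (x - S k) * w i k := by
        have hstep : ∀ k ∈ Finset.univ.erase i,
            (∑ j ∈ G.neighborFinset k,
              (if k = i then -(ρ i * f j i (S j - x) * w j i)
               else if j = i then ρ k * f i k (x - S k) * w i k else 0))
            = if k ∈ G.neighborFinset i then ρ k * f i k (x - S k) * w i k else 0 := by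
          intro k hkmem
          have hk : k ≠ i := (Finset.mem_erase.mp hkmem).1
          simp only [if_neg hk]
          rw [Finset.sum_ite_eq' (G.neighborFinset k) i (fun _ => ρ k * f i k (x - S k) * w i k)]
          congr 1
          simp [G.mem_neighborFinset, G.adj_comm]
        rw [Finset.sum_congr rfl hstep, Finset.sum_ite_mem]
        congr 1
        apply Finset.Subset.antisymm
        · exact Finset.inter_subset_right
        · intro k hk
          exact Finset.mem_inter.mpr
            ⟨Finset.mem_erase.mpr
              ⟨(G.ne_of_adj ((G.mem_neighborFinset i k).mp hk)).symm, Finset.mem_univ k⟩, hk⟩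
      rw [h1, h2]
      have eA : (∑ k ∈ G.neighborFinset i, ρ k * f i k (x - S k) * w i k)
          = ∑ j ∈ G.neighborFinset i, w i j * f i j (x - S j) * ρ j :=
        Finset.sum_congr rfl (fun j _ => by ring)
      have eB : (∑ j ∈ G.neighborFinset i, -(ρ i * f j i (S j - x) * w j i))
          = -∑ j ∈ G.neighborFinset i, w j i * f j i (S j - x) * ρ i := by
        rw [← Finset.sum_neg_distrib]
        exact Finset.sum_congr rfl (fun j _ => by ring)
      rw [eA, eB, Finset.sum_sub_distrib]
      ring
    rw [← hsum]
    exact hmain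
  -- the difference has zero partial derivatives
  have hzero : ∀ (ρ S : Fin N → ℝ) (i : Fin N) (x : ℝ),
      HasDerivAt (fun y => H ρ (Function.update S i y) - Φ ρ (Function.update S i y)) 0 x := by
    intro ρ S i x
    have h1 := hHS ρ (Function.update S i x) i
    simp only [Function.update_idem, Function.update_self] at h1
    have h0 := h1.sub (hΦd ρ S i x)
    have hv : (∑ j ∈ G.neighborFinset i,
          (w i j * f i j (x - Function.update S i x j) * ρ j
            - w j i * f j i (Function.update S i x j - x) * ρ i))
        = ∑ j ∈ G.neighborFinset i,
          (w i j * f i j (x - S j) * ρ j - w j i * f j i (S j - x) * ρ i) := by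
      apply Finset.sum_congr rfl
      intro j hj
      have hji : j ≠ i := G.ne_of_adj (G.adj_symm ((G.mem_neighborFinset i j).mp hj))
      rw [Function.update_of_ne hji]
    rw [hv, sub_self] at h0
    exact h0
  -- constancy along each coordinate
  have hconst : ∀ (ρ S : Fin N → ℝ) (i : Fin N) (a b : ℝ),
      H ρ (Function.update S i a) - Φ ρ (Function.update S i a)
        = H ρ (Function.update S i b) - Φ ρ (Function.update S i b) := by
    intro ρ S i a b
    exact is_const_of_deriv_eq_zero
      (fun x => (hzero ρ S i x).differentiableAt)
      (fun x => (hzero ρ S i x).deriv) a b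
  -- zero out coordinates one by one
  have hkey : ∀ (ρ S : Fin N → ℝ), H ρ S - Φ ρ S = H ρ 0 - Φ ρ 0 := by
    intro ρ S
    have main : ∀ t : Finset (Fin N),
        H ρ S - Φ ρ S = H ρ (fun j => if j ∈ t then 0 else S j)
          - Φ ρ (fun j => if j ∈ t then 0 else S j) := by
      intro t
      induction t using Finset.induction with
      | empty => simp
      | @insert a t ha ih =>
        set T : Fin N → ℝ := fun j => if j ∈ t then 0 else S j with hT
        have hT' : (fun j => if j ∈ insert a t then (0:ℝ) else S j) = Function.update T a 0 := by
          funext j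
          by_cases hj : j = a
          · subst hj; simp
          · simp [Function.update_of_ne hj, Finset.mem_insert, hj, hT]
        rw [hT']
        have hc := hconst ρ T a 0 (T a)
        rw [Function.update_eq_self] at hc
        rw [hc]
        exact ih
    have hu := main Finset.univ
    have h0 : (fun j : Fin N => if j ∈ (Finset.univ : Finset (Fin N)) then (0:ℝ) else S j)
        = (0 : Fin N → ℝ) := by
      funext j; simp
    rw [h0] at hu
    exact hu
  refine ⟨fun ρ => H ρ 0 - Φ ρ 0, fun ρ S => ?_⟩
  have hs : (∑ i, ∑ j ∈ G.neighborFinset i, ρ i * F j i (S j - S i) * w j i) = Φ ρ S := rfl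
  rw [hs]
  show H ρ S = Φ ρ S + (H ρ 0 - Φ ρ 0)
  have h := hkey ρ S
  linarith
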